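/- Let u, v, w be positive real numbers. There exist three non-collinear points A, B, C in the Euclidean plane ℝ² such that dist(A, midpoint(B,C)) = u, dist(B, midpoint(A,C)) = v and dist(C, midpoint(A,B)) = w if and only if u + v + w > 2·max(u,v,w). Moreover, when such a triangle exists, its side lengths are uniquely determined: dist(B,C)² = (4/9)(2(v²+w²) − u²), dist(A,C)² = (4/9)(2(u²+w²) − v²) and dist(A,B)² = (4/9)(2(u²+v²) − w²). -/

import Mathlib

open EuclideanSpace

lemma dist_sq_pts (A B : EuclideanSpace ℝ (Fin 2)) :
    dist A B ^ 2 = (A 0 - B 0) ^ 2 + (A 1 - B 1) ^ 2 := by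
  rw [EuclideanSpace.dist_eq, Real.sq_sqrt (by positivity)]
  simp [Fin.sum_univ_two, Real.dist_eq, sq_abs]

lemma midpoint_apply' (B C : EuclideanSpace ℝ (Fin 2)) (i : Fin 2) :
    midpoint ℝ B C i = (B i + C i) / 2 := by
  rw [midpoint_eq_smul_add]
  simp [PiLp.smul_apply, PiLp.add_apply]
  ring

lemma median_sq (A B C : EuclideanSpace ℝ (Fin 2)) :
    4 * dist A (midpoint ℝ B C) ^ 2 =
      2 * dist A B ^ 2 + 2 * dist A C ^ 2 - dist B C ^ 2 := by
  simp only [dist_sq_pts, midpoint_apply']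
  ring

lemma not_collinear_of_det (A B C : EuclideanSpace ℝ (Fin 2))
    (h : (B 0 - A 0) * (C 1 - A 1) - (B 1 - A 1) * (C 0 - A 0) ≠ 0) :
    ¬ Collinear ℝ ({A, B, C} : Set (EuclideanSpace ℝ (Fin 2))) := by
  intro hc
  rw [collinear_iff_of_mem (show A ∈ ({A, B, C} : Set _) by simp)] at hc
  obtain ⟨d, hd⟩ := hc
  obtain ⟨r, hr⟩ := hd B (by simp)
  obtain ⟨s, hs⟩ := hd C (by simp)
  apply h
  have hB : ∀ i, B i = r * d i + A i := by
    intro i; rw [hr]; simp [PiLp.add_apply, PiLp.smul_apply]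
  have hC : ∀ i, C i = s * d i + A i := by
    intro i; rw [hs]; simp [PiLp.add_apply, PiLp.smul_apply]
  rw [hB 0, hB 1, hC 0, hC 1]; ring

-- key strict inequality
lemma median_tri (A B C : EuclideanSpace ℝ (Fin 2))
    (h : ¬ Collinear ℝ ({A, B, C} : Set (EuclideanSpace ℝ (Fin 2))))
    (hq : B ≠ midpoint ℝ A C) (hr : C ≠ midpoint ℝ A B) :
    dist A (midpoint ℝ B C) < dist B (midpoint ℝ A C) + dist C (midpoint ℝ A B) := by
  set p : EuclideanSpace ℝ (Fin 2) := A - midpoint ℝ B C with hp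
  set q : EuclideanSpace ℝ (Fin 2) := B - midpoint ℝ A C with hqdef
  set r : EuclideanSpace ℝ (Fin 2) := C - midpoint ℝ A B with hrdef
  have hqi : ∀ i, q i = B i - (A i + C i) / 2 := by
    intro i
    simp [hqdef, PiLp.sub_apply, midpoint_apply']
  have hri : ∀ i, r i = C i - (A i + B i) / 2 := by
    intro i
    simp [hrdef, PiLp.sub_apply, midpoint_apply']
  have hpqr : p = -(q + r) := by
    ext i
    simp [hp, PiLp.sub_apply, PiLp.add_apply, PiLp.neg_apply, midpoint_apply', hqi, hri]
    ring
  have hnsr : ¬ SameRay ℝ q r := by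
    rintro (h0 | h0 | ⟨a, b, ha, hb, hab⟩)
    · exact hq (by rwa [sub_eq_zero] at h0)
    · exact hr (by rwa [sub_eq_zero] at h0)
    · apply h
      rw [collinear_iff_of_mem (show B ∈ ({A, B, C} : Set _) by simp)]
      refine ⟨q, ?_⟩
      rintro P (rfl | rfl | rfl)
      · refine ⟨(-4 * b - 2 * a) / (3 * b), ?_⟩
        ext i
        have habi : a * q i = b * r i := by
          have := congrArg (fun z : EuclideanSpace ℝ (Fin 2) => z i) hab
          simpa [PiLp.smul_apply] using this
        rw [hqi i, hri i] at habi
        simp [PiLp.add_apply, PiLp.smul_apply, hqi i]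
        field_simp
        ring_nf
        ring_nf at habi
        linarith
      · exact ⟨0, by simp⟩
      · refine ⟨(2 * a - 2 * b) / (3 * b), ?_⟩
        ext i
        have habi : a * q i = b * r i := by
          have := congrArg (fun z : EuclideanSpace ℝ (Fin 2) => z i) hab
          simpa [PiLp.smul_apply] using this
        rw [hqi i, hri i] at habi
        simp [PiLp.add_apply, PiLp.smul_apply, hqi i]
        field_simp
        ring_nf
        ring_nf at habi
        linarith
  have hlt : ‖q + r‖ < ‖q‖ + ‖r‖ := not_sameRay_iff_norm_add_lt.mp hnsr
  rw [dist_eq_norm, dist_eq_norm, dist_eq_norm, ← hp, ← hqdef, ← hrdef, hpqr, norm_neg]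
  exact hlt

lemma eq_of_sq_eq' {a b : ℝ} (h : a ^ 2 = b ^ 2) (ha : 0 ≤ a) (hb : 0 < b) : a = b := by
  nlinarith

theorem medians_existence_and_uniqueness (u v w : ℝ)
    (hu : 0 < u) (hv : 0 < v) (hw : 0 < w) :
    ((∃ A B C : EuclideanSpace ℝ (Fin 2),
        ¬ Collinear ℝ ({A, B, C} : Set (EuclideanSpace ℝ (Fin 2))) ∧
        dist A (midpoint ℝ B C) = u ∧ dist B (midpoint ℝ A C) = v ∧
        dist C (midpoint ℝ A B) = w) ↔ u + v + w > 2 * max u (max v w)) ∧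
    (∀ A B C : EuclideanSpace ℝ (Fin 2),
      ¬ Collinear ℝ ({A, B, C} : Set (EuclideanSpace ℝ (Fin 2))) →
      dist A (midpoint ℝ B C) = u → dist B (midpoint ℝ A C) = v →
      dist C (midpoint ℝ A B) = w →
      dist B C ^ 2 = 4 / 9 * (2 * (v ^ 2 + w ^ 2) - u ^ 2) ∧
      dist A C ^ 2 = 4 / 9 * (2 * (u ^ 2 + w ^ 2) - v ^ 2) ∧
      dist A B ^ 2 = 4 / 9 * (2 * (u ^ 2 + v ^ 2) - w ^ 2)) := by
  constructor
  · constructor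
    · rintro ⟨A, B, C, hcol, hA, hB, hC⟩
      have hABC : ({B, A, C} : Set (EuclideanSpace ℝ (Fin 2))) = {A, B, C} := by
        rw [Set.insert_comm]
      have hACB : ({C, A, B} : Set (EuclideanSpace ℝ (Fin 2))) = {A, B, C} := by
        rw [Set.insert_comm, Set.pair_comm]
      have hne : ∀ X Y Z : EuclideanSpace ℝ (Fin 2),
          dist X (midpoint ℝ Y Z) > 0 → X ≠ midpoint ℝ Y Z := by
        intro X Y Z h h'
        rw [h', dist_self] at h; exact lt_irrefl 0 h
      have h1 : u < v + w := by
        rw [← hA, ← hB, ← hC]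
        exact median_tri A B C hcol (hne _ _ _ (by rw [hB]; exact hv))
          (hne _ _ _ (by rw [hC]; exact hw))
      have h2 : v < u + w := by
        have := median_tri B A C (by rwa [hABC])
          (hne _ _ _ (by rw [hA]; exact hu))
          (hne _ _ _ (by rw [midpoint_comm, hC]; exact hw))
        rw [midpoint_comm B A] at this
        rw [← hA, ← hB, ← hC]
        linarith
      have h3 : w < u + v := by
        have := median_tri C A B (by rwa [hACB])
          (hne _ _ _ (by rw [midpoint_comm, hA]; exact hu))
          (hne _ _ _ (by rw [midpoint_comm, hB]; exact hv))
        rw [midpoint_comm C B, midpoint_comm C A] at this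
        rw [← hA, ← hB, ← hC]
        linarith
      have : max u (max v w) < (u + v + w) / 2 :=
        max_lt (by linarith) (max_lt (by linarith) (by linarith))
      linarith
    · intro hmax
      have h1 : u < v + w := by have := le_max_left u (max v w); linarith
      have h2 : v < u + w := by
        have := le_max_left v w; have := le_max_right u (max v w); linarith
      have h3 : w < u + v := by
        have := le_max_right v w; have := le_max_right u (max v w); linarith
      set x : ℝ := (w ^ 2 - u ^ 2 - v ^ 2) / (2 * u) with hxdef
      have h4 : 0 < 4 * u ^ 2 * v ^ 2 - (w ^ 2 - u ^ 2 - v ^ 2) ^ 2 := by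
        have hfac : (v + w - u) * ((u + w - v) * ((u + v - w) * (u + v + w)))
            = 4 * u ^ 2 * v ^ 2 - (w ^ 2 - u ^ 2 - v ^ 2) ^ 2 := by ring
        rw [← hfac]
        exact mul_pos (by linarith) (mul_pos (by linarith)
          (mul_pos (by linarith) (by linarith)))
      have hx2 : x ^ 2 < v ^ 2 := by
        rw [hxdef, div_pow, div_lt_iff₀ (by positivity)]
        nlinarith
      set y : ℝ := Real.sqrt (v ^ 2 - x ^ 2) with hydef
      have hy2 : y ^ 2 = v ^ 2 - x ^ 2 := Real.sq_sqrt (by linarith)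
      have hy : 0 < y := Real.sqrt_pos.mpr (by linarith)
      have hux : 2 * u * x = w ^ 2 - u ^ 2 - v ^ 2 := by
        rw [hxdef]; field_simp
      refine ⟨(WithLp.equiv 2 (Fin 2 → ℝ)).symm ![2 * u / 3, 0],
        (WithLp.equiv 2 (Fin 2 → ℝ)).symm ![2 * x / 3, 2 * y / 3],
        (WithLp.equiv 2 (Fin 2 → ℝ)).symm ![-(2 * u / 3) - 2 * x / 3, -(2 * y / 3)],
        ?_, ?_, ?_, ?_⟩
      · apply not_collinear_of_det
        simp only [WithLp.equiv_symm_apply, PiLp.toLp_apply, Matrix.cons_val_zero, Matrix.cons_val_one,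
          Matrix.head_cons]
        have : (2 * x / 3 - 2 * u / 3) * (-(2 * y / 3) - 0)
            - (2 * y / 3 - 0) * (-(2 * u / 3) - 2 * x / 3 - 2 * u / 3) = 4 * u * y / 3 := by
          ring
        rw [this]; positivity
      · apply eq_of_sq_eq' _ dist_nonneg hu
        rw [dist_sq_pts, midpoint_apply', midpoint_apply']
        simp only [WithLp.equiv_symm_apply, PiLp.toLp_apply, Matrix.cons_val_zero, Matrix.cons_val_one,
          Matrix.head_cons]
        ring
      · apply eq_of_sq_eq' _ dist_nonneg hv
        rw [dist_sq_pts, midpoint_apply', midpoint_apply']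
        simp only [WithLp.equiv_symm_apply, PiLp.toLp_apply, Matrix.cons_val_zero, Matrix.cons_val_one,
          Matrix.head_cons]
        nlinarith [hy2]
      · apply eq_of_sq_eq' _ dist_nonneg hw
        rw [dist_sq_pts, midpoint_apply', midpoint_apply']
        simp only [WithLp.equiv_symm_apply, PiLp.toLp_apply, Matrix.cons_val_zero, Matrix.cons_val_one,
          Matrix.head_cons]
        nlinarith [hy2, hux]
  · intro A B C _ hA hB hC
    have m1 := median_sq A B C
    have m2 := median_sq B A C
    have m3 := median_sq C A B
    rw [hA] at m1
    rw [hB] at m2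
    rw [hC] at m3
    rw [dist_comm B A] at m2
    rw [dist_comm C A, dist_comm C B] at m3
    exact ⟨by linarith, by linarith, by linarith⟩
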